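/- In the independent-set reduction DSP instance, if A is an independent set of G and S_A = {m_{v,k} : v ∈ A, 1 ≤ k ≤ ℓ} is the set of speaking mediators, then the revenue of the joint partition ×_{m_{v,k}∈S_A} P_{v,k} is at least |S_A| = ℓ·|A|. -/

import Mathlib

open Finset

/-- The second-highest value of `f` over a finite type (0 if fewer than two indices),
computed as the maximum over pairs of distinct indices of the minimum of the two values. -/
noncomputable def secondMax {B : Type*} [Fintype B] [DecidableEq B] (f : B → ℝ) : ℝ :=
  ((Finset.univ ×ˢ Finset.univ).filter (fun p : B × B => p.1 ≠ p.2)).fold max 0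
    (fun p => min (f p.1) (f p.2))

/-- The contribution `μ(S)·v(S)` of a part `S`: the second-highest, over bidders `i`,
of `Σ_{j∈S} μ j · vals i j`. -/
noncomputable def partVal {I B : Type*} [Fintype B] [DecidableEq B]
    (μ : I → ℝ) (vals : B → I → ℝ) (S : Finset I) : ℝ :=
  secondMax (fun i => ∑ j ∈ S, μ j * vals i j)

/-- The revenue of a collection of parts. -/
noncomputable def revenue {I B : Type*} [Fintype B] [DecidableEq B]
    (μ : I → ℝ) (vals : B → I → ℝ) (P : Finset (Finset I)) : ℝ :=
  ∑ S ∈ P, partVal μ vals S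

/-- `P` is a partition of the whole item set. -/
def IsPartition {I : Type*} (P : Finset (Finset I)) : Prop :=
  (∀ j : I, ∃ S ∈ P, j ∈ S) ∧
  (∀ S ∈ P, ∀ T ∈ P, S ≠ T → Disjoint S T) ∧
  (∅ : Finset I) ∉ P

/-- Items of the reduction instance: `Sum.inl (v,k)` is the non-helper item `j_{v,k}`,
`Sum.inr (v,k)` is the helper item `j'_{v,k}`. -/
abbrev RItem (V : Type*) (ℓ : ℕ) := (V × Fin ℓ) ⊕ (V × Fin ℓ)

/-- Bidders of the reduction instance: `Sum.inl (v,k)` is the single-minded bidder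
`i_{v,k}`, and `Sum.inr ()` is the helper bidder `i_h`. -/
abbrev RBidder (V : Type*) (ℓ : ℕ) := (V × Fin ℓ) ⊕ Unit

/-- The uniform prior on the `2ℓN` items. -/
noncomputable def redμ (V : Type*) [Fintype V] (ℓ : ℕ) : RItem V ℓ → ℝ :=
  fun _ => 1 / (2 * ℓ * Fintype.card V : ℝ)

/-- Valuations of the reduction instance: `i_{v,k}` values `j_{v,k}` at `2ℓN`, and
`i_h` values each helper item at `2ℓN`. -/
def redVals (V : Type*) [Fintype V] [DecidableEq V] (ℓ : ℕ) :
    RBidder V ℓ → RItem V ℓ → ℝ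
  | Sum.inl p, Sum.inl q => if p = q then (2 * ℓ * Fintype.card V : ℝ) else 0
  | Sum.inl _, Sum.inr _ => 0
  | Sum.inr _, Sum.inl _ => 0
  | Sum.inr _, Sum.inr _ => (2 * ℓ * Fintype.card V : ℝ)

/-- The informative part of mediator `m_{v,k}`'s binary partition:
`{j_{v,k}, j'_{v,k}} ∪ ⋃_{u : uv ∈ E} H_u`. -/
def medPart {V : Type*} [Fintype V] [DecidableEq V] {ℓ : ℕ}
    (G : SimpleGraph V) [DecidableRel G.Adj] (v : V) (k : Fin ℓ) :
    Finset (RItem V ℓ) :=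
  Finset.univ.filter (fun x =>
    x = Sum.inl (v, k) ∨ x = Sum.inr (v, k) ∨
    ∃ u : V, ∃ k' : Fin ℓ, G.Adj u v ∧ x = Sum.inr (u, k'))

/-- The joint partition induced by the set `S` of speaking mediators: two items are in
the same part iff they are not separated by any mediator of `S`. -/
def jointOf {V : Type*} [Fintype V] [DecidableEq V] {ℓ : ℕ}
    (G : SimpleGraph V) [DecidableRel G.Adj] (S : Finset (V × Fin ℓ)) :
    Finset (Finset (RItem V ℓ)) :=
  Finset.univ.image (fun x : RItem V ℓ =>
    Finset.univ.filter (fun y =>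
      ∀ p ∈ S, (y ∈ medPart G p.1 p.2 ↔ x ∈ medPart G p.1 p.2)))

lemma mem_medPart_inl' {V : Type*} [Fintype V] [DecidableEq V] {ℓ : ℕ}
    (G : SimpleGraph V) [DecidableRel G.Adj] (p : V × Fin ℓ) (u : V) (k' : Fin ℓ) :
    (Sum.inl p : RItem V ℓ) ∈ medPart G u k' ↔ p = (u, k') := by
  simp [medPart]

lemma mem_medPart_inr' {V : Type*} [Fintype V] [DecidableEq V] {ℓ : ℕ}
    (G : SimpleGraph V) [DecidableRel G.Adj] (p : V × Fin ℓ) (u : V) (k' : Fin ℓ) :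
    (Sum.inr p : RItem V ℓ) ∈ medPart G u k' ↔ p = (u, k') ∨ G.Adj p.1 u := by
  obtain ⟨w, k0⟩ := p
  simp only [medPart, mem_filter, mem_univ, true_and, Sum.inr.injEq, reduceCtorEq,
    false_or, Sum.inl.injEq]
  aesop

lemma one_le_secondMax {B : Type*} [Fintype B] [DecidableEq B] (f : B → ℝ) (i i' : B)
    (h : i ≠ i') (h1 : (1:ℝ) ≤ f i) (h2 : (1:ℝ) ≤ f i') : (1:ℝ) ≤ secondMax f := by
  unfold secondMax
  rw [Finset.le_fold_max]
  exact Or.inr ⟨(i, i'), by simp [h], le_min h1 h2⟩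

lemma secondMax_nonneg {B : Type*} [Fintype B] [DecidableEq B] (f : B → ℝ) :
    (0:ℝ) ≤ secondMax f := by
  unfold secondMax
  rw [Finset.le_fold_max]
  exact Or.inl le_rfl

lemma redVals_nonneg (V : Type*) [Fintype V] [DecidableEq V] (ℓ : ℕ)
    (i : RBidder V ℓ) (j : RItem V ℓ) : 0 ≤ redVals V ℓ i j := by
  rcases i with p | u <;> rcases j with q | q <;> simp [redVals] <;> positivity

/-- If `A` is an independent set of `G` and all mediators `m_{v,k}` with `v ∈ A` speak,
the revenue of the resulting joint partition is at least `ℓ·|A|`. -/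
theorem red_revenue_of_independent_set {V : Type*} [Fintype V] [DecidableEq V] {ℓ : ℕ}
    (hℓ : 1 ≤ ℓ) (hV : 1 ≤ Fintype.card V)
    (G : SimpleGraph V) [DecidableRel G.Adj]
    (A : Finset V) (hA : ∀ u ∈ A, ∀ w ∈ A, ¬ G.Adj u w) :
    (ℓ * A.card : ℝ) ≤
      revenue (redμ V ℓ) (redVals V ℓ) (jointOf G (A ×ˢ (Finset.univ : Finset (Fin ℓ)))) := by
  classical
  have hl : (1:ℝ) ≤ (ℓ : ℝ) := by exact_mod_cast hℓ
  have hN : (1:ℝ) ≤ (Fintype.card V : ℝ) := by exact_mod_cast hV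
  have hc : (0:ℝ) < 2 * ℓ * Fintype.card V := by nlinarith
  set S : Finset (V × Fin ℓ) := A ×ˢ (Finset.univ : Finset (Fin ℓ)) with hS
  set g : V × Fin ℓ → Finset (RItem V ℓ) := fun x =>
    Finset.univ.filter (fun y =>
      ∀ p ∈ S, (y ∈ medPart G p.1 p.2 ↔ (Sum.inl x : RItem V ℓ) ∈ medPart G p.1 p.2))
    with hg
  have hself : ∀ p : V × Fin ℓ, (Sum.inl p : RItem V ℓ) ∈ g p := by
    intro p; simp [hg]
  have hinr : ∀ p ∈ S, (Sum.inr p : RItem V ℓ) ∈ g p := by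
    intro p hp
    simp only [hg, mem_filter, mem_univ, true_and]
    rintro ⟨u, k'⟩ hq
    simp only [hS, mem_product, mem_univ, and_true] at hp hq
    rw [mem_medPart_inl', mem_medPart_inr']
    have : ¬ G.Adj p.1 u := hA _ hp _ hq
    simp [this]
  have hinj : ∀ p ∈ S, ∀ q ∈ S, g p = g q → p = q := by
    intro p hp q hq hpq
    have h1 : (Sum.inl q : RItem V ℓ) ∈ g p := hpq ▸ hself q
    simp only [hg, mem_filter, mem_univ, true_and] at h1
    have := h1 p hp
    rw [mem_medPart_inl', mem_medPart_inl'] at this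
    exact (this.mpr rfl).symm
  have himg : S.image g ⊆ jointOf G S := by
    intro T hT
    rw [mem_image] at hT
    obtain ⟨p, _, rfl⟩ := hT
    exact mem_image_of_mem _ (mem_univ (Sum.inl p : RItem V ℓ))
  have hterm : ∀ p ∈ S, (1:ℝ) ≤ partVal (redμ V ℓ) (redVals V ℓ) (g p) := by
    intro p hp
    have hnn : ∀ (i : RBidder V ℓ), ∀ j ∈ g p, 0 ≤ redμ V ℓ j * redVals V ℓ i j := by
      intro i j _
      exact mul_nonneg (by unfold redμ; positivity) (redVals_nonneg V ℓ i j)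
    refine one_le_secondMax _ (Sum.inl p) (Sum.inr ()) (by simp) ?_ ?_
    · have h1 := Finset.single_le_sum (hnn (Sum.inl p)) (hself p)
      have h2 : redμ V ℓ (Sum.inl p) * redVals V ℓ (Sum.inl p) (Sum.inl p) = 1 := by
        simp only [redμ, redVals, if_pos rfl, ↓reduceIte]
        field_simp
      linarith
    · have h1 := Finset.single_le_sum (hnn (Sum.inr ())) (hinr p hp)
      have h2 : redμ V ℓ (Sum.inr p) * redVals V ℓ (Sum.inr ()) (Sum.inr p) = 1 := by
        simp only [redμ, redVals]
        field_simp
      linarith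
  calc (ℓ * A.card : ℝ) = ∑ _p ∈ S, (1:ℝ) := by
        simp [hS, Finset.card_product, mul_comm]
    _ ≤ ∑ p ∈ S, partVal (redμ V ℓ) (redVals V ℓ) (g p) := Finset.sum_le_sum hterm
    _ = ∑ T ∈ S.image g, partVal (redμ V ℓ) (redVals V ℓ) T :=
        (Finset.sum_image hinj).symm
    _ ≤ revenue (redμ V ℓ) (redVals V ℓ) (jointOf G S) := by
        unfold revenue
        exact Finset.sum_le_sum_of_subset_of_nonneg himg
          (fun T _ _ => secondMax_nonneg _)
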